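/- Let H = X₁X₂²Y₂⁶ + Y₁X₂⁶Y₂² ∈ V_{1,8} and H' = X₁Y₂⁴ + Y₁X₂⁴ ∈ V_{1,4}. Then T^{(1,2)}(H, H') = 0, and the two linear maps T^{(1,2)}(H, •) : V_{1,4} → V_{0,8} and T^{(1,2)}(•, H') : V_{1,8} → V_{0,8} are both surjective. -/

import Mathlib

set_option synthInstance.maxHeartbeats 1000000
set_option maxHeartbeats 1000000
noncomputable section
open MvPolynomial

/-- The `r`-th transvectant `T^(r) : V_d × V_{d'} → V_{d+d'-2r}` of binary forms (in the
variables `X = X 0`, `Y = X 1`), as a bilinear map: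
`T^(r)(P, P') = ∑_{i=0}^{r} (-1)^i C(r,i) (∂^r P/∂X^(r-i)∂Y^i) (∂^r P'/∂X^i ∂Y^(r-i))`. -/
def transvBil (r : ℕ) :
    MvPolynomial (Fin 2) ℂ →ₗ[ℂ] MvPolynomial (Fin 2) ℂ →ₗ[ℂ] MvPolynomial (Fin 2) ℂ :=
  ∑ i ∈ Finset.range (r + 1),
    ((-1 : ℂ) ^ i * (r.choose i : ℂ)) •
      (LinearMap.mul ℂ (MvPolynomial (Fin 2) ℂ)).compl₁₂
        (((pderiv (0 : Fin 2)).toLinearMap ^ (r - i)) * ((pderiv (1 : Fin 2)).toLinearMap ^ i))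
        (((pderiv (0 : Fin 2)).toLinearMap ^ i) * ((pderiv (1 : Fin 2)).toLinearMap ^ (r - i)))

/-- The `(1,s)`-th transvectant `T^{(1,s)} : V_{1,b} × V_{1,b'} → V_{0,b+b'-2s}` for biforms,
where an element `X₁ ⊗ P + Y₁ ⊗ Q` of `V_{1,b} = V_1 ⊗ V_b` is recorded as the pair
`(P, Q)` of binary forms of degree `b` in `(X₂, Y₂)`:
`T^{(1,s)}((P,Q), (P',Q')) = T^(s)(P, Q') - T^(s)(Q, P')`. -/
def transv1 (s : ℕ) :
    (MvPolynomial (Fin 2) ℂ × MvPolynomial (Fin 2) ℂ) →ₗ[ℂ]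
      (MvPolynomial (Fin 2) ℂ × MvPolynomial (Fin 2) ℂ) →ₗ[ℂ] MvPolynomial (Fin 2) ℂ :=
  (transvBil s).compl₁₂ (LinearMap.fst ℂ _ _) (LinearMap.snd ℂ _ _) -
    (transvBil s).compl₁₂ (LinearMap.snd ℂ _ _) (LinearMap.fst ℂ _ _)

lemma pd_ofNat (i : Fin 2) (n : ℕ) [n.AtLeastTwo] :
    pderiv i (no_index (OfNat.ofNat n) : MvPolynomial (Fin 2) ℂ) = 0 := by
  rw [show (OfNat.ofNat n : MvPolynomial (Fin 2) ℂ) = ((n : ℕ) : MvPolynomial (Fin 2) ℂ) from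
    (Nat.cast_ofNat).symm]
  exact Derivation.map_natCast _ n

lemma degree_fin2 (d : Fin 2 →₀ ℕ) : d.degree = d 0 + d 1 := by
  rw [Finsupp.degree_apply, Finset.sum_subset (Finset.subset_univ _)]
  · simp [Fin.sum_univ_two]
  · intro i _ hi
    simpa using Finsupp.notMem_support_iff.mp hi

lemma decomp {n : ℕ} {R : MvPolynomial (Fin 2) ℂ} (h : R ∈ homogeneousSubmodule (Fin 2) ℂ n) :
    R = ∑ k ∈ Finset.range (n + 1),
        coeff (Finsupp.single 0 (n - k) + Finsupp.single 1 k) R • (X 0 ^ (n - k) * X 1 ^ k) := by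
  rw [mem_homogeneousSubmodule] at h
  ext d
  rw [coeff_sum]
  simp only [coeff_smul, X_pow_eq_monomial, monomial_mul, one_mul, coeff_monomial, smul_eq_mul,
    mul_ite, mul_one, mul_zero]
  by_cases hd : d 0 + d 1 = n
  · rw [Finset.sum_eq_single (d 1)]
    · have he : (Finsupp.single (0 : Fin 2) (n - d 1) + Finsupp.single 1 (d 1)) = d := by
        ext i
        fin_cases i <;> simp [Finsupp.single_apply] <;> omega
      rw [if_pos he, he]
    · intro k _ hkne
      rw [if_neg]
      intro he
      apply hkne
      have h1' := congrArg (fun f => f 1) he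
      simpa using h1'
    · intro hmem
      exact absurd (Finset.mem_range.mpr (by omega)) hmem
  · have h0 : coeff d R = 0 := h.coeff_eq_zero (by rw [degree_fin2]; exact hd)
    rw [h0]
    symm
    apply Finset.sum_eq_zero
    intro k hk
    rw [if_neg]
    intro he
    have h0' := congrArg (fun f => f 0) he
    have h1' := congrArg (fun f => f 1) he
    have hkn : k ≤ n := Nat.lt_succ_iff.mp (Finset.mem_range.mp hk)
    simp only [Finsupp.add_apply, Finsupp.single_apply] at h0' h1'
    simp at h0' h1'
    omega

lemma memXX {a b n : ℕ} (h : a + b = n) :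
    (X 0 ^ a * X 1 ^ b : MvPolynomial (Fin 2) ℂ) ∈ homogeneousSubmodule (Fin 2) ℂ n := by
  rw [mem_homogeneousSubmodule, ← h]
  have h0 : (X 0 ^ a : MvPolynomial (Fin 2) ℂ).IsHomogeneous a := by
    simpa using (isHomogeneous_X ℂ (0 : Fin 2)).pow a
  have h1 : (X 1 ^ b : MvPolynomial (Fin 2) ℂ).IsHomogeneous b := by
    simpa using (isHomogeneous_X ℂ (1 : Fin 2)).pow b
  exact h0.mul h1

def q1 : ℕ → MvPolynomial (Fin 2) ℂ × MvPolynomial (Fin 2) ℂ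
  | 0 => (X 0 ^ 4 * X 1 ^ 0, 0)
  | 1 => (X 0 ^ 3 * X 1 ^ 1, 0)
  | 2 => (X 0 ^ 2 * X 1 ^ 2, 0)
  | 3 => (X 0 ^ 1 * X 1 ^ 3, 0)
  | 4 => (X 0 ^ 0 * X 1 ^ 4, 0)
  | 5 => (0, X 0 ^ 3 * X 1 ^ 1)
  | 6 => (0, X 0 ^ 2 * X 1 ^ 2)
  | 7 => (0, X 0 ^ 1 * X 1 ^ 3)
  | _ => (0, X 0 ^ 0 * X 1 ^ 4)

def c1 : ℕ → ℂ
  | 0 => -24 | 1 => 60 | 2 => 32 | 3 => -108 | 4 => -360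
  | 5 => 108 | 6 => -32 | 7 => -60 | _ => 24

def q2 : ℕ → MvPolynomial (Fin 2) ℂ × MvPolynomial (Fin 2) ℂ
  | 0 => (X 0 ^ 6 * X 1 ^ 2, 0)
  | 1 => (X 0 ^ 5 * X 1 ^ 3, 0)
  | 2 => (X 0 ^ 4 * X 1 ^ 4, 0)
  | 3 => (X 0 ^ 3 * X 1 ^ 5, 0)
  | 4 => (X 0 ^ 2 * X 1 ^ 6, 0)
  | 5 => (X 0 ^ 1 * X 1 ^ 7, 0)
  | 6 => (X 0 ^ 0 * X 1 ^ 8, 0)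
  | 7 => (0, X 0 ^ 3 * X 1 ^ 5)
  | _ => (0, X 0 ^ 2 * X 1 ^ 6)

def c2 : ℕ → ℂ
  | 0 => 24 | 1 => 72 | 2 => 144 | 3 => 240 | 4 => 360
  | 5 => 504 | 6 => 672 | 7 => -72 | _ => -24

lemma val1 : ∀ k ∈ Finset.range 9,
    transv1 2 (X 0 ^ 2 * X 1 ^ 6, X 0 ^ 6 * X 1 ^ 2) (q1 k) = c1 k • (X 0 ^ (8 - k) * X 1 ^ k) := by
  intro k hk
  rw [Finset.mem_range] at hk
  interval_cases k <;>
  · simp [q1, c1, transv1, transvBil, Finset.sum_range_succ, Module.End.pow_apply,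
      Function.iterate_succ, pderiv_mul, pd_ofNat, Derivation.map_natCast, smul_eq_C_mul,
      map_ofNat, map_neg]
    ring

lemma val2 : ∀ k ∈ Finset.range 9,
    transv1 2 (q2 k) (X 1 ^ 4, X 0 ^ 4) = c2 k • (X 0 ^ (8 - k) * X 1 ^ k) := by
  intro k hk
  rw [Finset.mem_range] at hk
  interval_cases k <;>
  · simp [q2, c2, transv1, transvBil, Finset.sum_range_succ, Module.End.pow_apply,
      Function.iterate_succ, pderiv_mul, pd_ofNat, Derivation.map_natCast, smul_eq_C_mul,
      map_ofNat, map_neg]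
    ring

lemma c1ne : ∀ k ∈ Finset.range 9, c1 k ≠ 0 := by
  intro k hk
  rw [Finset.mem_range] at hk
  interval_cases k <;> norm_num [c1]

lemma c2ne : ∀ k ∈ Finset.range 9, c2 k ≠ 0 := by
  intro k hk
  rw [Finset.mem_range] at hk
  interval_cases k <;> norm_num [c2]

lemma mem1 : ∀ k ∈ Finset.range 9,
    q1 k ∈ (homogeneousSubmodule (Fin 2) ℂ 4).prod (homogeneousSubmodule (Fin 2) ℂ 4) := by
  intro k hk
  rw [Finset.mem_range] at hk
  interval_cases k <;>
    exact Submodule.mem_prod.mpr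
      ⟨by first | exact memXX (by norm_num) | exact Submodule.zero_mem _,
       by first | exact memXX (by norm_num) | exact Submodule.zero_mem _⟩

lemma mem2 : ∀ k ∈ Finset.range 9,
    q2 k ∈ (homogeneousSubmodule (Fin 2) ℂ 8).prod (homogeneousSubmodule (Fin 2) ℂ 8) := by
  intro k hk
  rw [Finset.mem_range] at hk
  interval_cases k <;>
    exact Submodule.mem_prod.mpr
      ⟨by first | exact memXX (by norm_num) | exact Submodule.zero_mem _,
       by first | exact memXX (by norm_num) | exact Submodule.zero_mem _⟩

/-- **Non-degeneracy of the transvectant pairing `T^{(1,2)} : V_{1,8} × V_{1,4} → V_{0,8}`.**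
For `H = X₁X₂²Y₂⁶ + Y₁X₂⁶Y₂² ∈ V_{1,8}` and `H' = X₁Y₂⁴ + Y₁X₂⁴ ∈ V_{1,4}`:
`T^{(1,2)}(H, H') = 0`, while `T^{(1,2)}(H, •) : V_{1,4} → V_{0,8}` and
`T^{(1,2)}(•, H') : V_{1,8} → V_{0,8}` are both surjective. -/
theorem transvectant_nondegenerate_18 :
    (transv1 2 (X 0 ^ 2 * X 1 ^ 6, X 0 ^ 6 * X 1 ^ 2) (X 1 ^ 4, X 0 ^ 4) = 0) ∧
    (∀ R ∈ homogeneousSubmodule (Fin 2) ℂ 8,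
      ∃ PQ ∈ (homogeneousSubmodule (Fin 2) ℂ 4).prod (homogeneousSubmodule (Fin 2) ℂ 4),
        transv1 2 (X 0 ^ 2 * X 1 ^ 6, X 0 ^ 6 * X 1 ^ 2) PQ = R) ∧
    (∀ R ∈ homogeneousSubmodule (Fin 2) ℂ 8,
      ∃ PQ ∈ (homogeneousSubmodule (Fin 2) ℂ 8).prod (homogeneousSubmodule (Fin 2) ℂ 8),
        transv1 2 PQ (X 1 ^ 4, X 0 ^ 4) = R) := by
  refine ⟨?_, ?_, ?_⟩
  · simp [transv1, transvBil, Finset.sum_range_succ, Module.End.pow_apply,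
      Function.iterate_succ, pderiv_mul, pd_ofNat, Derivation.map_natCast]
    ring
  · intro R hR
    refine ⟨∑ k ∈ Finset.range 9,
        (coeff (Finsupp.single 0 (8 - k) + Finsupp.single 1 k) R / c1 k) • q1 k, ?_, ?_⟩
    · exact Submodule.sum_mem _ fun k hk => Submodule.smul_mem _ _ (mem1 k hk)
    · rw [map_sum]
      simp only [map_smul]
      calc
        ∑ k ∈ Finset.range 9,
            (coeff (Finsupp.single 0 (8 - k) + Finsupp.single 1 k) R / c1 k) •
              transv1 2 (X 0 ^ 2 * X 1 ^ 6, X 0 ^ 6 * X 1 ^ 2) (q1 k)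
          = ∑ k ∈ Finset.range 9,
              coeff (Finsupp.single 0 (8 - k) + Finsupp.single 1 k) R •
                (X 0 ^ (8 - k) * X 1 ^ k) := by
            refine Finset.sum_congr rfl fun k hk => ?_
            rw [val1 k hk, smul_smul, div_mul_cancel₀ _ (c1ne k hk)]
        _ = R := (decomp hR).symm
  · intro R hR
    refine ⟨∑ k ∈ Finset.range 9,
        (coeff (Finsupp.single 0 (8 - k) + Finsupp.single 1 k) R / c2 k) • q2 k, ?_, ?_⟩
    · exact Submodule.sum_mem _ fun k hk => Submodule.smul_mem _ _ (mem2 k hk)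
    · rw [map_sum, LinearMap.sum_apply]
      simp only [map_smul, LinearMap.smul_apply]
      calc
        ∑ k ∈ Finset.range 9,
            (coeff (Finsupp.single 0 (8 - k) + Finsupp.single 1 k) R / c2 k) •
              transv1 2 (q2 k) (X 1 ^ 4, X 0 ^ 4)
          = ∑ k ∈ Finset.range 9,
              coeff (Finsupp.single 0 (8 - k) + Finsupp.single 1 k) R •
                (X 0 ^ (8 - k) * X 1 ^ k) := by
            refine Finset.sum_congr rfl fun k hk => ?_
            rw [val2 k hk, smul_smul, div_mul_cancel₀ _ (c2ne k hk)]
        _ = R := (decomp hR).symm
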